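/- (Equality part of Theorem 1.) Let V be a finite set and let C₁, …, C_k be subsets of V with C₁ ∪ ⋯ ∪ C_k = V satisfying the running intersection property with separators S_i := C_i ∩ (C₁ ∪ ⋯ ∪ C_{i−1}), i = 2, …, k. Let n₁, n₂ > 0 be real numbers and let Σ̂, Σ̂⁽¹⁾, Σ̂⁽²⁾ be symmetric positive definite V×V matrices, each of whose inverse vanishes at every pair of distinct vertices not jointly contained in some C_i. For A ⊆ V nonempty define λ(A) := n₁ · log(det Σ̂_A / det Σ̂⁽¹⁾_A) + n₂ · log(det Σ̂_A / det Σ̂⁽²⁾_A), and λ(∅) := 0. Then λ(V) = λ(C₁) + ∑_{j=2}^{k} [λ(C_j) − λ(S_j)]. -/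

import Mathlib

open Matrix

/-- Principal sub-matrix of `M` indexed by the finset `A`. -/
def psub {V : Type*} [Fintype V] [DecidableEq V] (M : Matrix V V ℝ) (A : Finset V) :
    Matrix A A ℝ :=
  M.submatrix (fun a => a.1) (fun a => a.1)

/-- The log likelihood ratio criterion
`λ(A) = n₁ log(det Σ̂_A / det Σ̂⁽¹⁾_A) + n₂ log(det Σ̂_A / det Σ̂⁽²⁾_A)`.
For `A = ∅` all the determinants are `1` (empty matrices), so `λ(∅) = 0`. -/
noncomputable def lam {V : Type*} [Fintype V] [DecidableEq V]
    (n₁ n₂ : ℝ) (M M₁ M₂ : Matrix V V ℝ) (A : Finset V) : ℝ :=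
  n₁ * Real.log ((psub M A).det / (psub M₁ A).det) +
    n₂ * Real.log ((psub M A).det / (psub M₂ A).det)

set_option maxHeartbeats 4000000

section Aux

variable {V W : Type*} [Fintype V] [DecidableEq V] [Fintype W] [DecidableEq W]

lemma posDef_submatrix_of_injective {M : Matrix V V ℝ} (hM : M.PosDef) (e : W → V)
    (he : Function.Injective e) : (M.submatrix e e).PosDef := by
  have hs : M.submatrix e e = ((1 : Matrix V V ℝ).submatrix id e)ᴴ * M *
      ((1 : Matrix V V ℝ).submatrix id e) := by
    rw [(by simp : M = 1 * M * 1), submatrix_mul (he₂ := Function.bijective_id),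
      submatrix_mul (he₂ := Function.bijective_id), submatrix_id_id]
    simp [conjTranspose_submatrix]
  refine posDef_iff_dotProduct_mulVec.mpr ⟨?_, ?_⟩
  · rw [hs]
    exact isHermitian_conjTranspose_mul_mul _ hM.1
  · intro x hx
    set B := (1 : Matrix V V ℝ).submatrix id e with hB
    have hBx : B *ᵥ x ≠ 0 := by
      obtain ⟨w₀, hw₀⟩ := Function.ne_iff.mp hx
      intro h
      apply hw₀
      have := congrFun h (e w₀)
      simp only [hB, mulVec, Pi.zero_apply, dotProduct, submatrix_apply, id_eq,
        one_apply] at this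
      rw [Finset.sum_eq_single w₀ (fun b _ hb => by simp [he.ne_iff.mpr (Ne.symm hb)])
        (by simp)] at this
      simpa using this
    have := hM.dotProduct_mulVec_pos hBx
    rw [hs]
    simpa only [hB, star_mulVec, dotProduct_mulVec, vecMul_vecMul] using this

lemma psub_posDef {M : Matrix V V ℝ} (hM : M.PosDef) (A : Finset V) : (psub M A).PosDef :=
  posDef_submatrix_of_injective hM _ Subtype.val_injective

lemma psub_det_pos {M : Matrix V V ℝ} (hM : M.PosDef) (A : Finset V) : 0 < (psub M A).det :=
  (psub_posDef hM A).det_pos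

section schur

variable {M : Matrix V V ℝ} (hM : M.PosDef) (A : Finset V)

noncomputable def eAV (A : Finset V) : ({x : V // x ∈ A} ⊕ {x : V // x ∉ A}) ≃ V :=
  Equiv.sumCompl (· ∈ A)

lemma schur_main {M : Matrix V V ℝ} (hM : M.PosDef) (A : Finset V) :
    M⁻¹.det * (psub M A).det =
      (M⁻¹.submatrix (Subtype.val : {x : V // x ∉ A} → V) Subtype.val).det ∧
    (psub M A)⁻¹ = psub M⁻¹ A -
      M⁻¹.submatrix (Subtype.val : A → V) (Subtype.val : {x : V // x ∉ A} → V) *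
        (M⁻¹.submatrix (Subtype.val : {x : V // x ∉ A} → V) Subtype.val)⁻¹ *
        M⁻¹.submatrix (Subtype.val : {x : V // x ∉ A} → V) (Subtype.val : A → V) := by
  set K := M⁻¹ with hK
  have hKpd : K.PosDef := hM.inv
  set e := eAV A with he
  set L := K.submatrix e e with hL
  have hLpd : L.PosDef := posDef_submatrix_of_injective hKpd _ (Equiv.injective _)
  set P := L.toBlocks₁₁ with hP
  set Q := L.toBlocks₁₂ with hQ
  set R := L.toBlocks₂₁ with hR
  set S := L.toBlocks₂₂ with hS
  have hPeq : P = psub K A := rfl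
  have hQeq : Q = K.submatrix (Subtype.val : A → V) (Subtype.val : {x : V // x ∉ A} → V) := rfl
  have hReq : R = K.submatrix (Subtype.val : {x : V // x ∉ A} → V) (Subtype.val : A → V) := rfl
  have hSeq : S = K.submatrix (Subtype.val : {x : V // x ∉ A} → V) Subtype.val := rfl
  have hLblocks : L = fromBlocks P Q R S := (fromBlocks_toBlocks L).symm
  have hSpd : S.PosDef := posDef_submatrix_of_injective hKpd _ Subtype.val_injective
  haveI : Invertible S := invertibleOfIsUnitDet _ hSpd.det_pos.ne'.isUnit
  haveI : Invertible L := invertibleOfIsUnitDet _ hLpd.det_pos.ne'.isUnit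
  haveI : Invertible (fromBlocks P Q R S) := hLblocks ▸ ‹Invertible L›
  haveI : Invertible (P - Q * ⅟S * R) := invertibleOfFromBlocks₂₂Invertible P Q R S
  have hXunit : IsUnit (P - Q * ⅟S * R).det :=
    (Matrix.isUnit_iff_isUnit_det _).mp (isUnit_of_invertible _)
  have hLinv : L⁻¹ = M.submatrix e e := by
    rw [hL, hK, inv_submatrix_equiv, Matrix.nonsing_inv_nonsing_inv _ hM.det_pos.ne'.isUnit]
  have hfb : ⅟(fromBlocks P Q R S) =
      fromBlocks (⅟(P - Q * ⅟S * R)) (-(⅟(P - Q * ⅟S * R) * Q * ⅟S))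
        (-(⅟S * R * ⅟(P - Q * ⅟S * R))) (⅟S + ⅟S * R * ⅟(P - Q * ⅟S * R) * Q * ⅟S) :=
    invOf_fromBlocks₂₂_eq P Q R S
  have h2 : L⁻¹ = fromBlocks (⅟(P - Q * ⅟S * R)) (-(⅟(P - Q * ⅟S * R) * Q * ⅟S))
      (-(⅟S * R * ⅟(P - Q * ⅟S * R))) (⅟S + ⅟S * R * ⅟(P - Q * ⅟S * R) * Q * ⅟S) := by
    rw [show L⁻¹ = (fromBlocks P Q R S)⁻¹ from congrArg _ hLblocks,
      ← invOf_eq_nonsing_inv, hfb]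
  have hMA : psub M A = ⅟(P - Q * ⅟S * R) := by
    calc psub M A = (M.submatrix e e).toBlocks₁₁ := rfl
      _ = (L⁻¹).toBlocks₁₁ := by rw [hLinv]
      _ = ⅟(P - Q * ⅟S * R) := by rw [h2]; rfl
  constructor
  · have hdetL : L.det = S.det * (P - Q * ⅟S * R).det := by
      conv_lhs => rw [hLblocks]
      exact det_fromBlocks₂₂ P Q R S
    have hdetK : K.det = L.det := by rw [hL, det_submatrix_equiv_self]
    have hdet1 : (psub M A).det = Ring.inverse (P - Q * ⅟S * R).det := by
      rw [hMA, invOf_eq_nonsing_inv, det_nonsing_inv]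
    rw [hdetK, hdetL, hdet1, Ring.inverse_eq_inv, mul_assoc,
      mul_inv_cancel₀ hXunit.ne_zero, mul_one, ← hSeq]
  · have hx : (psub M A)⁻¹ = P - Q * ⅟S * R := by
      rw [hMA, invOf_eq_nonsing_inv, Matrix.nonsing_inv_nonsing_inv _ hXunit]
    rw [hx, ← hPeq, ← hQeq, ← hReq, ← hSeq, invOf_eq_nonsing_inv]
    rfl

end schur

lemma det_submatrix_range {K : Matrix V V ℝ} {W : Type*} [Fintype W] [DecidableEq W]
    (f : W → V) (hf : Function.Injective f) (A : Finset V)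
    (hrange : ∀ v, v ∈ A ↔ ∃ w, f w = v) :
    (K.submatrix f f).det = (psub K A).det := by
  have hmem : ∀ w, f w ∈ A := fun w => (hrange (f w)).2 ⟨w, rfl⟩
  let e : W ≃ A := Equiv.ofBijective (fun w => ⟨f w, hmem w⟩)
    ⟨fun a b hab => hf (congrArg Subtype.val hab),
     fun ⟨v, hv⟩ => by obtain ⟨w, rfl⟩ := (hrange v).1 hv; exact ⟨w, rfl⟩⟩
  have : K.submatrix f f = (psub K A).submatrix e e := rfl
  rw [this, det_submatrix_equiv_self]

lemma det_psub_univ (K : Matrix V V ℝ) : (psub K Finset.univ).det = K.det := by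
  rw [show psub K Finset.univ =
      K.submatrix (Equiv.subtypeUnivEquiv (fun x => Finset.mem_univ x))
        (Equiv.subtypeUnivEquiv (fun x => Finset.mem_univ x)) from rfl,
    det_submatrix_equiv_self]

lemma det_psub_union {K : Matrix V V ℝ} {P Q : Finset V} (hd : ∀ x, ¬(x ∈ P ∧ x ∈ Q))
    (hz : ∀ v w, v ∈ P → w ∈ Q → K v w = 0) (hz' : ∀ v w, v ∈ Q → w ∈ P → K v w = 0) :
    (psub K (P ∪ Q)).det = (psub K P).det * (psub K Q).det := by
  classical
  let f : (P ⊕ Q) → V := Sum.elim Subtype.val Subtype.val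
  have hf : Function.Injective f := by
    rintro (a | a) (b | b) hab
    · exact congrArg Sum.inl (Subtype.ext hab)
    · exact absurd ⟨a.2, by rw [show (a.1 : V) = b.1 from hab]; exact b.2⟩ (hd a.1)
    · exact absurd ⟨b.2, by rw [← show (a.1 : V) = b.1 from hab]; exact a.2⟩ (hd b.1)
    · exact congrArg Sum.inr (Subtype.ext hab)
  have h1 : (K.submatrix f f).det = (psub K (P ∪ Q)).det := by
    refine det_submatrix_range f hf (P ∪ Q) (fun v => ?_)
    constructor
    · intro hv
      rcases Finset.mem_union.mp hv with h | h
      · exact ⟨Sum.inl ⟨v, h⟩, rfl⟩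
      · exact ⟨Sum.inr ⟨v, h⟩, rfl⟩
    · rintro ⟨(w | w), rfl⟩
      · exact Finset.mem_union_left _ w.2
      · exact Finset.mem_union_right _ w.2
  have h2 : K.submatrix f f = fromBlocks (psub K P) 0 0 (psub K Q) := by
    ext (i | i) (j | j)
    · rfl
    · exact hz i.1 j.1 i.2 j.2
    · exact hz' i.1 j.1 i.2 j.2
    · rfl
  rw [← h1, h2, det_fromBlocks_zero₂₁]

lemma inv_symm_entry {M : Matrix V V ℝ} (hM : M.PosDef) (v w : V) : M⁻¹ v w = M⁻¹ w v := by
  have h := hM.inv.isHermitian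
  have := congrFun (congrFun h v) w
  simpa [conjTranspose_apply] using this.symm

/-- The key determinant identity for one decomposition step. -/
lemma det_decomp {M : Matrix V V ℝ} (hM : M.PosDef) (A B : Finset V)
    (hU : A ∪ B = Finset.univ)
    (hz : ∀ v w, v ∈ A → v ∉ B → w ∈ B → w ∉ A → M⁻¹ v w = 0) :
    M.det * (psub M (A ∩ B)).det = (psub M A).det * (psub M B).det := by
  classical
  have hAc : ∀ v : V, v ∉ A ↔ v ∈ B \ A := by
    intro v
    have : v ∈ A ∪ B := hU ▸ Finset.mem_univ v
    simp only [Finset.mem_sdiff]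
    exact ⟨fun h => ⟨(Finset.mem_union.mp this).resolve_left h, h⟩, fun h => h.2⟩
  have hBc : ∀ v : V, v ∉ B ↔ v ∈ A \ B := by
    intro v
    have : v ∈ A ∪ B := hU ▸ Finset.mem_univ v
    simp only [Finset.mem_sdiff]
    exact ⟨fun h => ⟨(Finset.mem_union.mp this).resolve_right h, h⟩, fun h => h.2⟩
  have hABc : ∀ v : V, v ∉ A ∩ B ↔ v ∈ (A \ B) ∪ (B \ A) := by
    intro v
    have hv : v ∈ A ∪ B := hU ▸ Finset.mem_univ v
    simp only [Finset.mem_union, Finset.mem_sdiff, Finset.mem_inter]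
    rcases Finset.mem_union.mp hv with h | h
    · by_cases h' : v ∈ B
      · simp [h, h']
      · simp [h, h']
    · by_cases h' : v ∈ A
      · simp [h, h']
      · simp [h, h']
  have eA := (schur_main hM A).1
  have eB := (schur_main hM B).1
  have eAB := (schur_main hM (A ∩ B)).1
  rw [det_submatrix_range _ Subtype.val_injective (B \ A)
    (fun v => ⟨fun hv => ⟨⟨v, (hAc v).2 hv⟩, rfl⟩, fun ⟨w, hw⟩ => hw ▸ (hAc w.1).1 w.2⟩)] at eA
  rw [det_submatrix_range _ Subtype.val_injective (A \ B)
    (fun v => ⟨fun hv => ⟨⟨v, (hBc v).2 hv⟩, rfl⟩, fun ⟨w, hw⟩ => hw ▸ (hBc w.1).1 w.2⟩)] at eB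
  rw [det_submatrix_range _ Subtype.val_injective ((A \ B) ∪ (B \ A))
    (fun v => ⟨fun hv => ⟨⟨v, (hABc v).2 hv⟩, rfl⟩, fun ⟨w, hw⟩ => hw ▸ (hABc w.1).1 w.2⟩)] at eAB
  have hsplit : (psub M⁻¹ ((A \ B) ∪ (B \ A))).det =
      (psub M⁻¹ (A \ B)).det * (psub M⁻¹ (B \ A)).det := by
    refine det_psub_union ?_ ?_ ?_
    · intro x ⟨h1, h2⟩
      exact (Finset.mem_sdiff.mp h2).2 (Finset.mem_sdiff.mp h1).1
    · intro v w hv hw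
      exact hz v w (Finset.mem_sdiff.mp hv).1 (Finset.mem_sdiff.mp hv).2
        (Finset.mem_sdiff.mp hw).1 (Finset.mem_sdiff.mp hw).2
    · intro v w hv hw
      exact (inv_symm_entry hM v w).trans
        (hz w v (Finset.mem_sdiff.mp hw).1 (Finset.mem_sdiff.mp hw).2
          (Finset.mem_sdiff.mp hv).1 (Finset.mem_sdiff.mp hv).2)
  rw [hsplit] at eAB
  have hdetM : 0 < M.det := hM.det_pos
  have hMK : M.det * M⁻¹.det = 1 := by
    rw [det_nonsing_inv, Ring.inverse_eq_inv, mul_inv_cancel₀ hdetM.ne']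
  have hs : (psub M (A ∩ B)).det =
      M.det * ((psub M⁻¹ (A \ B)).det * (psub M⁻¹ (B \ A)).det) := by
    have h := congrArg (fun t => M.det * t) eAB
    rw [← mul_assoc, hMK, one_mul] at h
    exact h
  rw [hs, ← eB, ← eA]
  linear_combination (M.det * M⁻¹.det + 1) * (psub M A).det * (psub M B).det * hMK

lemma psub_inv_zero {M : Matrix V V ℝ} (hM : M.PosDef) (A : Finset V) (v w : A)
    (h0 : M⁻¹ v.1 w.1 = 0)
    (hvw : (∀ a, a ∉ A → M⁻¹ v.1 a = 0) ∨ (∀ b, b ∉ A → M⁻¹ b w.1 = 0)) :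
    (psub M A)⁻¹ v w = 0 := by
  rw [(schur_main hM A).2, Matrix.sub_apply]
  have hp : psub M⁻¹ A v w = 0 := h0
  rw [hp, zero_sub, neg_eq_zero]
  rcases hvw with h | h
  · erw [Matrix.mul_apply]
    refine Finset.sum_eq_zero fun b _ => ?_
    erw [Matrix.mul_apply]
    rw [Finset.sum_eq_zero fun a _ => ?_, zero_mul]
    have : M⁻¹ v.1 a.1 = 0 := h a.1 a.2
    rw [submatrix_apply, this, zero_mul]
  · erw [Matrix.mul_apply]
    refine Finset.sum_eq_zero fun b _ => ?_
    have : M⁻¹ b.1 w.1 = 0 := h b.1 b.2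
    rw [submatrix_apply, this, mul_zero]

lemma det_psub_psub {M : Matrix V V ℝ} (T A : Finset V) (hA : A ⊆ T) :
    (psub (psub M T) (Finset.univ.filter (fun x : T => x.1 ∈ A))).det = (psub M A).det := by
  have h : psub (psub M T) (Finset.univ.filter (fun x : T => x.1 ∈ A)) =
      M.submatrix (fun a => a.1.1) (fun a => a.1.1) := rfl
  rw [h]
  refine det_submatrix_range _ (fun a b hab => Subtype.ext (Subtype.ext hab)) A (fun v => ?_)
  constructor
  · intro hv
    exact ⟨⟨⟨v, hA hv⟩, by simp [hv]⟩, rfl⟩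
  · rintro ⟨a, rfl⟩
    exact (Finset.mem_filter.mp a.2).2

lemma det_psub_empty (M : Matrix V V ℝ) : (psub M (∅ : Finset V)).det = 1 := by
  haveI : IsEmpty ((∅ : Finset V) : Finset V) := Finset.isEmpty_coe_sort.mpr rfl
  exact Matrix.det_isEmpty

theorem det_factorization : ∀ (k : ℕ), 0 < k → ∀ {V : Type*} [Fintype V] [DecidableEq V]
    (C : Fin k → Finset V), Finset.univ.biUnion C = Finset.univ →
    (∀ i : Fin k, (i : ℕ) ≠ 0 → ∃ l < i, C i ∩ (Finset.Iio i).biUnion C ⊆ C l) →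
    ∀ (M : Matrix V V ℝ), M.PosDef →
    (∀ v w : V, v ≠ w → (¬ ∃ i, v ∈ C i ∧ w ∈ C i) → M⁻¹ v w = 0) →
    M.det * ∏ j, (psub M (C j ∩ (Finset.Iio j).biUnion C)).det =
      ∏ j, (psub M (C j)).det := by
  intro k
  induction k with
  | zero => exact fun h => absurd h (lt_irrefl 0)
  | succ k IH =>
    intro _ V _ _ C hcover hRIP M hM hz
    rcases Nat.eq_zero_or_pos k with rfl | hkpos
    · -- base case: one clique
      have hC0 : C 0 = Finset.univ := by
        rw [← hcover]
        ext v
        simp only [Finset.mem_biUnion, Finset.mem_univ, true_and]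
        exact ⟨fun h => ⟨0, h⟩, fun ⟨i, h⟩ => by
          rwa [show i = 0 from Fin.ext (by omega)] at h⟩
      have hI0 : Finset.Iio (0 : Fin 1) = ∅ := by
        ext x
        simp [Finset.mem_Iio, Fin.not_lt_zero]
      rw [Fin.prod_univ_one, Fin.prod_univ_one, hI0, Finset.biUnion_empty,
        Finset.inter_empty, det_psub_empty, mul_one, hC0, det_psub_univ]
    · -- inductive step
      have hlast0 : ((Fin.last k : Fin (k + 1)) : ℕ) ≠ 0 := by
        simp only [Fin.val_last]; omega
      set T : Finset V := (Finset.Iio (Fin.last k)).biUnion C with hT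
      have hTmem : ∀ v, v ∈ T ↔ ∃ j : Fin (k + 1), j < Fin.last k ∧ v ∈ C j := by
        intro v
        simp only [hT, Finset.mem_biUnion, Finset.mem_Iio]
      have hTC : T ∪ C (Fin.last k) = Finset.univ := by
        ext v
        simp only [Finset.mem_union, Finset.mem_univ, iff_true]
        have hv : v ∈ Finset.univ.biUnion C := hcover ▸ Finset.mem_univ v
        obtain ⟨j, -, hj⟩ := Finset.mem_biUnion.mp hv
        rcases lt_or_eq_of_le (Fin.le_last j) with h | h
        · exact Or.inl ((hTmem v).2 ⟨j, h, hj⟩)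
        · exact Or.inr (h ▸ hj)
      have hzd : ∀ v w, v ∈ T → v ∉ C (Fin.last k) → w ∈ C (Fin.last k) → w ∉ T →
          M⁻¹ v w = 0 := by
        intro v w hvT hvC hwC hwT
        refine hz v w (fun h => hvC (h ▸ hwC)) ?_
        rintro ⟨i, hvi, hwi⟩
        rcases lt_or_eq_of_le (Fin.le_last i) with h | h
        · exact hwT ((hTmem w).2 ⟨i, h, hwi⟩)
        · exact hvC (h ▸ hvi)
      have hdec := det_decomp hM T (C (Fin.last k)) hTC hzd
      -- RIP at the last clique
      obtain ⟨l, hl, hsubl⟩ := hRIP (Fin.last k) hlast0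
      have hCl : ∀ v, v ∈ C (Fin.last k) → v ∈ T → v ∈ C l := by
        intro v h1 h2
        exact hsubl (Finset.mem_inter.mpr ⟨h1, h2⟩)
      set l' : Fin k := ⟨l.1, by have := hl; rw [Fin.lt_def, Fin.val_last] at this; omega⟩
        with hl'
      have hl'c : l'.castSucc = l := by
        apply Fin.ext
        simp [hl']
      -- the marginal data
      set M' : Matrix T T ℝ := psub M T with hM'def
      have hM' : M'.PosDef := psub_posDef hM T
      set C' : Fin k → Finset T :=
        fun i => Finset.univ.filter (fun x : T => x.1 ∈ C i.castSucc) with hC'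
      have hmemC' : ∀ (i : Fin k) (x : T), x ∈ C' i ↔ x.1 ∈ C i.castSucc := by
        intro i x
        simp [hC']
      have hcover' : Finset.univ.biUnion C' = Finset.univ := by
        ext x
        simp only [Finset.mem_biUnion, Finset.mem_univ, iff_true, true_and]
        obtain ⟨j, hj, hjC⟩ := (hTmem x.1).1 x.2
        have hjk : (j : ℕ) < k := by rw [Fin.lt_def, Fin.val_last] at hj; exact hj
        refine ⟨⟨j.1, hjk⟩, (hmemC' _ x).2 ?_⟩
        have : (⟨j.1, hjk⟩ : Fin k).castSucc = j := Fin.ext rfl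
        rw [this]
        exact hjC
      have hsepmem : ∀ (i : Fin k), C' i ∩ (Finset.Iio i).biUnion C' =
          Finset.univ.filter
            (fun x : T => x.1 ∈ C i.castSucc ∩ (Finset.Iio i.castSucc).biUnion C) := by
        intro i
        ext x
        rw [Finset.mem_inter, hmemC', Finset.mem_filter]
        simp only [Finset.mem_biUnion, Finset.mem_Iio, Finset.mem_univ, true_and,
          Finset.mem_inter]
        constructor
        · rintro ⟨h1, j, hj, hj2⟩
          exact ⟨h1, j.castSucc, Fin.castSucc_lt_castSucc_iff.mpr hj, (hmemC' j x).1 hj2⟩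
        · rintro ⟨h1, j, hj, hj2⟩
          have hjk : (j : ℕ) < k := by
            rw [Fin.lt_def, Fin.coe_castSucc] at hj
            omega
          refine ⟨h1, ⟨j.1, hjk⟩, ?_, (hmemC' _ x).2 ?_⟩
          · rw [Fin.lt_def]
            rw [Fin.lt_def, Fin.coe_castSucc] at hj
            exact hj
          · have : (⟨j.1, hjk⟩ : Fin k).castSucc = j := Fin.ext rfl
            rw [this]
            exact hj2
      have hRIP' : ∀ i : Fin k, (i : ℕ) ≠ 0 →
          ∃ l₀ < i, C' i ∩ (Finset.Iio i).biUnion C' ⊆ C' l₀ := by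
        intro i hi
        obtain ⟨m, hm, hsub⟩ := hRIP i.castSucc (by simpa using hi)
        have hmk : (m : ℕ) < k := by
          rw [Fin.lt_def, Fin.coe_castSucc] at hm
          have := i.2
          omega
        refine ⟨⟨m.1, hmk⟩, ?_, ?_⟩
        · rw [Fin.lt_def]
          rw [Fin.lt_def, Fin.coe_castSucc] at hm
          exact hm
        · intro x hx
          rw [hsepmem i] at hx
          have hx' := (Finset.mem_filter.mp hx).2
          have hxm : x.1 ∈ C m := hsub hx'
          refine (hmemC' _ x).2 ?_
          have hcast : (⟨m.1, hmk⟩ : Fin k).castSucc = m := Fin.ext rfl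
          rw [hcast]
          exact hxm
      have claim : ∀ v : V, v ∈ T → (¬ ∀ a, a ∉ T → M⁻¹ v a = 0) → v ∈ C l := by
        intro v hvT h
        push_neg at h
        obtain ⟨a, haT, hMa⟩ := h
        have hne : v ≠ a := fun h => haT (h ▸ hvT)
        have hcl : ∃ i, v ∈ C i ∧ a ∈ C i := by
          by_contra hn
          exact hMa (hz v a hne hn)
        obtain ⟨i, hvi, hai⟩ := hcl
        have hil : i = Fin.last k := by
          rcases lt_or_eq_of_le (Fin.le_last i) with h | h
          · exact absurd ((hTmem a).2 ⟨i, h, hai⟩) haT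
          · exact h
        exact hCl v (hil ▸ hvi) hvT
      have hz' : ∀ x y : T, x ≠ y → (¬ ∃ i, x ∈ C' i ∧ y ∈ C' i) → M'⁻¹ x y = 0 := by
        intro x y hxy hno
        refine psub_inv_zero hM T x y ?_ ?_
        · refine hz x.1 y.1 (fun h => hxy (Subtype.ext h)) ?_
          rintro ⟨i, hxi, hyi⟩
          rcases lt_or_eq_of_le (Fin.le_last i) with h | h
          · have hik : (i : ℕ) < k := by rw [Fin.lt_def, Fin.val_last] at h; exact h
            have hcast : (⟨i.1, hik⟩ : Fin k).castSucc = i := Fin.ext rfl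
            exact hno ⟨⟨i.1, hik⟩, (hmemC' _ x).2 (by rw [hcast]; exact hxi),
              (hmemC' _ y).2 (by rw [hcast]; exact hyi)⟩
          · subst h
            have hx1 : x.1 ∈ C l := hCl x.1 hxi x.2
            have hy1 : y.1 ∈ C l := hCl y.1 hyi y.2
            exact hno ⟨l', (hmemC' _ x).2 (by rw [hl'c]; exact hx1),
              (hmemC' _ y).2 (by rw [hl'c]; exact hy1)⟩
        · by_contra hcon
          push_neg at hcon
          obtain ⟨h1, h2⟩ := hcon
          have hx1 : x.1 ∈ C l := claim x.1 x.2 (by push_neg; exact h1)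
          have hy1 : y.1 ∈ C l := by
            refine claim y.1 y.2 ?_
            push_neg
            obtain ⟨b, hbT, hMb⟩ := h2
            exact ⟨b, hbT, fun hh => hMb ((inv_symm_entry hM b y.1) ▸ hh)⟩
          exact hno ⟨l', (hmemC' _ x).2 (by rw [hl'c]; exact hx1),
            (hmemC' _ y).2 (by rw [hl'c]; exact hy1)⟩
      have hIH := IH hkpos C' hcover' hRIP' M' hM' hz'
      -- translate determinants
      have hCsub : ∀ i : Fin k, C i.castSucc ⊆ T := by
        intro i v hv
        exact (hTmem v).2 ⟨i.castSucc, Fin.castSucc_lt_last i, hv⟩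
      have hCd : ∀ i : Fin k, (psub M' (C' i)).det = (psub M (C i.castSucc)).det := by
        intro i
        exact det_psub_psub T _ (hCsub i)
      have hSd : ∀ i : Fin k, (psub M' (C' i ∩ (Finset.Iio i).biUnion C')).det =
          (psub M (C i.castSucc ∩ (Finset.Iio i.castSucc).biUnion C)).det := by
        intro i
        rw [hsepmem i]
        exact det_psub_psub T _ (fun v hv => hCsub i (Finset.mem_inter.mp hv).1)
      have hprodS : ∏ i : Fin k, (psub M' (C' i ∩ (Finset.Iio i).biUnion C')).det
          = ∏ i : Fin k, (psub M (C i.castSucc ∩ (Finset.Iio i.castSucc).biUnion C)).det :=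
        Finset.prod_congr rfl (fun i _ => hSd i)
      have hprodC : ∏ i : Fin k, (psub M' (C' i)).det
          = ∏ i : Fin k, (psub M (C i.castSucc)).det :=
        Finset.prod_congr rfl (fun i _ => hCd i)
      have hIH2 : (psub M T).det *
          ∏ i : Fin k, (psub M (C i.castSucc ∩ (Finset.Iio i.castSucc).biUnion C)).det =
          ∏ i : Fin k, (psub M (C i.castSucc)).det := by
        rw [← hprodS, ← hprodC]
        exact hIH
      have e1 : M.det * (psub M (C (Fin.last k) ∩ (Finset.Iio (Fin.last k)).biUnion C)).det =
          (psub M T).det * (psub M (C (Fin.last k))).det := by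
        rw [show C (Fin.last k) ∩ (Finset.Iio (Fin.last k)).biUnion C = T ∩ C (Fin.last k) by
          rw [Finset.inter_comm, hT]]
        exact hdec
      rw [Fin.prod_univ_castSucc, Fin.prod_univ_castSucc]
      calc M.det * ((∏ i : Fin k,
              (psub M (C i.castSucc ∩ (Finset.Iio i.castSucc).biUnion C)).det) *
            (psub M (C (Fin.last k) ∩ (Finset.Iio (Fin.last k)).biUnion C)).det)
          = (M.det * (psub M (C (Fin.last k) ∩ (Finset.Iio (Fin.last k)).biUnion C)).det) *
            ∏ i : Fin k,
              (psub M (C i.castSucc ∩ (Finset.Iio i.castSucc).biUnion C)).det := by ring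
        _ = ((psub M T).det * (psub M (C (Fin.last k))).det) *
            ∏ i : Fin k,
              (psub M (C i.castSucc ∩ (Finset.Iio i.castSucc).biUnion C)).det := by rw [e1]
        _ = (psub M (C (Fin.last k))).det * ((psub M T).det *
            ∏ i : Fin k,
              (psub M (C i.castSucc ∩ (Finset.Iio i.castSucc).biUnion C)).det) := by ring
        _ = (psub M (C (Fin.last k))).det * ∏ i : Fin k, (psub M (C i.castSucc)).det := by
            rw [← hIH2]
        _ = (∏ i : Fin k, (psub M (C i.castSucc)).det) * (psub M (C (Fin.last k))).det := by
            ring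


end Aux

/-- Equality part of Theorem 1: with cliques `C₁, …, C_k` covering `V`, satisfying the
running intersection property with separators `S_i`, and estimates `Σ̂, Σ̂⁽¹⁾, Σ̂⁽²⁾`
symmetric positive definite with inverses respecting the graphical structure,
`λ(V) = λ(C₁) + ∑_{j=2}^k [λ(C_j) − λ(S_j)]`. -/
theorem stmt_2 {V : Type*} [Fintype V] [DecidableEq V]
    (k : ℕ) (hk : 0 < k) (C : Fin k → Finset V)
    (hcover : Finset.univ.biUnion C = Finset.univ)
    (Sep : Fin k → Finset V)
    (hSep : ∀ i, Sep i = C i ∩ (Finset.Iio i).biUnion C)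
    (hRIP : ∀ i : Fin k, (⟨0, hk⟩ : Fin k) < i → ∃ l < i, Sep i ⊆ C l)
    (n₁ n₂ : ℝ) (hn₁ : 0 < n₁) (hn₂ : 0 < n₂)
    (M M₁ M₂ : Matrix V V ℝ)
    (hMsym : M.IsSymm) (hM₁sym : M₁.IsSymm) (hM₂sym : M₂.IsSymm)
    (hM : M.PosDef) (hM₁ : M₁.PosDef) (hM₂ : M₂.PosDef)
    (hzM : ∀ v w : V, v ≠ w → (¬ ∃ i, v ∈ C i ∧ w ∈ C i) → M⁻¹ v w = 0)
    (hzM₁ : ∀ v w : V, v ≠ w → (¬ ∃ i, v ∈ C i ∧ w ∈ C i) → M₁⁻¹ v w = 0)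
    (hzM₂ : ∀ v w : V, v ≠ w → (¬ ∃ i, v ∈ C i ∧ w ∈ C i) → M₂⁻¹ v w = 0) :
    lam n₁ n₂ M M₁ M₂ Finset.univ =
      lam n₁ n₂ M M₁ M₂ (C ⟨0, hk⟩) +
        ∑ j ∈ Finset.univ.erase (⟨0, hk⟩ : Fin k),
          (lam n₁ n₂ M M₁ M₂ (C j) - lam n₁ n₂ M M₁ M₂ (Sep j)) := by
  have hRIP' : ∀ i : Fin k, (i : ℕ) ≠ 0 → ∃ l < i, C i ∩ (Finset.Iio i).biUnion C ⊆ C l := by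
    intro i hi
    obtain ⟨l, hl, hs⟩ := hRIP i (by
      have h0 : (⟨0, hk⟩ : Fin k).val = 0 := rfl
      rw [Fin.lt_def, h0]
      omega)
    exact ⟨l, hl, by rw [← hSep]; exact hs⟩
  have key : ∀ (N : Matrix V V ℝ), N.PosDef →
      (∀ v w : V, v ≠ w → (¬ ∃ i, v ∈ C i ∧ w ∈ C i) → N⁻¹ v w = 0) →
      Real.log (psub N Finset.univ).det =
        ∑ j, (Real.log (psub N (C j)).det - Real.log (psub N (Sep j)).det) := by
    intro N hN hzN
    have hf := det_factorization k hk C hcover hRIP' N hN hzN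
    have hsd : ∀ j : Fin k,
        (psub N (C j ∩ (Finset.Iio j).biUnion C)).det = (psub N (Sep j)).det := fun j => by
      rw [hSep j]
    have hPP : ∏ j, (psub N (C j ∩ (Finset.Iio j).biUnion C)).det
        = ∏ j, (psub N (Sep j)).det := Finset.prod_congr rfl (fun j _ => hsd j)
    have hf2 : N.det * ∏ j, (psub N (Sep j)).det = ∏ j, (psub N (C j)).det := by
      rw [← hPP]
      exact hf
    have hNd : 0 < N.det := hN.det_pos
    have hPd : ∀ j : Fin k, 0 < (psub N (Sep j)).det := fun j => psub_det_pos hN _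
    have hCd : ∀ j : Fin k, 0 < (psub N (C j)).det := fun j => psub_det_pos hN _
    have hlog := congrArg Real.log hf2
    rw [Real.log_mul hNd.ne' (Finset.prod_pos (fun j _ => hPd j)).ne',
      Real.log_prod (fun j _ => (hPd j).ne'),
      Real.log_prod (fun j _ => (hCd j).ne')] at hlog
    rw [det_psub_univ, Finset.sum_sub_distrib]
    linarith [hlog]
  have lam_eq : ∀ A : Finset V, lam n₁ n₂ M M₁ M₂ A =
      n₁ * (Real.log (psub M A).det - Real.log (psub M₁ A).det) +
      n₂ * (Real.log (psub M A).det - Real.log (psub M₂ A).det) := by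
    intro A
    unfold lam
    rw [Real.log_div (psub_det_pos hM A).ne' (psub_det_pos hM₁ A).ne',
      Real.log_div (psub_det_pos hM A).ne' (psub_det_pos hM₂ A).ne']
  have hS0 : Sep ⟨0, hk⟩ = ∅ := by
    rw [hSep]
    have : Finset.Iio (⟨0, hk⟩ : Fin k) = ∅ := by
      ext x
      simp only [Finset.mem_Iio, Finset.notMem_empty, iff_false, Fin.lt_def]
      omega
    rw [this, Finset.biUnion_empty, Finset.inter_empty]
  have h0 : lam n₁ n₂ M M₁ M₂ (Sep ⟨0, hk⟩) = 0 := by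
    rw [hS0]
    unfold lam
    rw [det_psub_empty, det_psub_empty, det_psub_empty]
    simp
  have hRHS : lam n₁ n₂ M M₁ M₂ (C ⟨0, hk⟩) +
      ∑ j ∈ Finset.univ.erase (⟨0, hk⟩ : Fin k),
        (lam n₁ n₂ M M₁ M₂ (C j) - lam n₁ n₂ M M₁ M₂ (Sep j)) =
      ∑ j, (lam n₁ n₂ M M₁ M₂ (C j) - lam n₁ n₂ M M₁ M₂ (Sep j)) := by
    rw [← Finset.add_sum_erase _ (fun j => lam n₁ n₂ M M₁ M₂ (C j) - lam n₁ n₂ M M₁ M₂ (Sep j))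
      (Finset.mem_univ (⟨0, hk⟩ : Fin k)), h0, sub_zero]
  have hlam2 : ∀ j : Fin k, lam n₁ n₂ M M₁ M₂ (C j) - lam n₁ n₂ M M₁ M₂ (Sep j) =
      (n₁ * (Real.log (psub M (C j)).det - Real.log (psub M₁ (C j)).det) +
        n₂ * (Real.log (psub M (C j)).det - Real.log (psub M₂ (C j)).det)) -
      (n₁ * (Real.log (psub M (Sep j)).det - Real.log (psub M₁ (Sep j)).det) +
        n₂ * (Real.log (psub M (Sep j)).det - Real.log (psub M₂ (Sep j)).det)) := fun j => by
    rw [lam_eq, lam_eq]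
  have hsum : ∑ j, (lam n₁ n₂ M M₁ M₂ (C j) - lam n₁ n₂ M M₁ M₂ (Sep j)) =
      ∑ j, ((n₁ * (Real.log (psub M (C j)).det - Real.log (psub M₁ (C j)).det) +
        n₂ * (Real.log (psub M (C j)).det - Real.log (psub M₂ (C j)).det)) -
      (n₁ * (Real.log (psub M (Sep j)).det - Real.log (psub M₁ (Sep j)).det) +
        n₂ * (Real.log (psub M (Sep j)).det - Real.log (psub M₂ (Sep j)).det))) :=
    Finset.sum_congr rfl (fun j _ => hlam2 j)
  rw [hRHS, hsum, lam_eq, key M hM hzM, key M₁ hM₁ hzM₁, key M₂ hM₂ hzM₂]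
  simp only [Finset.sum_sub_distrib, Finset.sum_add_distrib, ← Finset.mul_sum]
  ring
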